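/- Let X(ℝⁿ) be a translation-invariant Banach function space. Then for all τ > 1, R > 0, and y ∈ ℝⁿ, the ratio ‖χ_{B(y,τR)}‖_X / ‖χ_{B(y,R)}‖_X is at most (4√n · τ)ⁿ. In particular, every translation-invariant Banach function space satisfies the doubling property. -/

import Mathlib

open MeasureTheory Filter ENNReal Metric

noncomputable section

/-- A Banach function norm on measurable functions over a measure space `α`,
following Bennett–Sharpley: axioms (A1)–(A5). -/
structure BanachFunctionNorm (α : Type) [MeasureSpace α] where
  ρ : (α → ℝ≥0∞) → ℝ≥0∞
  ρ_zero : ∀ f, ρ f = 0 ↔ f =ᵐ[volume] 0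
  ρ_smul : ∀ (a : NNReal) (f : α → ℝ≥0∞), ρ (fun x => (a : ℝ≥0∞) * f x) = a * ρ f
  ρ_add : ∀ f g, ρ (fun x => f x + g x) ≤ ρ f + ρ g
  ρ_mono : ∀ f g, (∀ᵐ x ∂volume, f x ≤ g x) → ρ f ≤ ρ g
  ρ_fatou : ∀ (f : ℕ → α → ℝ≥0∞),
      (∀ j, ∀ᵐ x ∂volume, f j x ≤ f (j+1) x) →
      ρ (fun x => ⨆ j, f j x) = ⨆ j, ρ (f j)
  ρ_finite : ∀ E : Set α, MeasurableSet E → volume E < ⊤ → ρ (E.indicator 1) < ⊤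
  ρ_loc_embed : ∀ E : Set α, MeasurableSet E → volume E < ⊤ →
      ∃ C : ℝ≥0∞, C < ⊤ ∧ ∀ f : α → ℝ≥0∞, ∫⁻ x in E, f x ∂volume ≤ C * ρ f

/-- The associate (Köthe dual) norm of a Banach function norm. -/
def BanachFunctionNorm.associate {α : Type} [MeasureSpace α]
    (X : BanachFunctionNorm α) (g : α → ℝ≥0∞) : ℝ≥0∞ :=
  ⨆ f ∈ {f : α → ℝ≥0∞ | X.ρ f ≤ 1}, ∫⁻ x, f x * g x ∂volume

lemma BFN_zero {α : Type} [MeasureSpace α] (X : BanachFunctionNorm α) :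
    X.ρ (fun _ => 0) = 0 := (X.ρ_zero _).mpr (by rfl)

lemma BFN_sum_le {α : Type} [MeasureSpace α] (X : BanachFunctionNorm α)
    {ι : Type} [DecidableEq ι] (F : Finset ι) (f : ι → α → ℝ≥0∞) :
    X.ρ (fun x => ∑ k ∈ F, f k x) ≤ ∑ k ∈ F, X.ρ (f k) := by
  induction F using Finset.induction with
  | empty => simp [BFN_zero X]
  | @insert a s ha ih =>
    simp only [Finset.sum_insert ha]
    exact (X.ρ_add _ _).trans (add_le_add le_rfl ih)

lemma BFN_ball_translate {n : ℕ} (X : BanachFunctionNorm (EuclideanSpace ℝ (Fin n)))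
    (hTI : ∀ (y : EuclideanSpace ℝ (Fin n)) (f : EuclideanSpace ℝ (Fin n) → ℝ≥0∞),
        X.ρ (fun x => f (x - y)) = X.ρ f)
    (y z : EuclideanSpace ℝ (Fin n)) (R : ℝ) :
    X.ρ ((ball z R).indicator 1) = X.ρ ((ball y R).indicator 1) := by
  have h := hTI (y - z) ((ball z R).indicator 1)
  rw [← h]
  congr 1
  funext x
  have hd : dist (x - (y - z)) z = dist x y := by
    rw [dist_eq_norm, dist_eq_norm]
    congr 1
    abel
  have hmem : x - (y - z) ∈ ball z R ↔ x ∈ ball y R := by simp [mem_ball, hd]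
  by_cases hx : x ∈ ball y R
  · rw [Set.indicator_of_mem (hmem.mpr hx), Set.indicator_of_mem hx]; rfl
  · rw [Set.indicator_of_notMem (fun h => hx (hmem.mp h)), Set.indicator_of_notMem hx]

lemma BFN_key {n : ℕ} (X : BanachFunctionNorm (EuclideanSpace ℝ (Fin n)))
    (hTI : ∀ (y : EuclideanSpace ℝ (Fin n)) (f : EuclideanSpace ℝ (Fin n) → ℝ≥0∞),
        X.ρ (fun x => f (x - y)) = X.ρ f)
    {τ R : ℝ} (hτ : 1 < τ) (hR : 0 < R) (y : EuclideanSpace ℝ (Fin n)) :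
    X.ρ ((Metric.ball y (τ * R)).indicator 1)
      ≤ ENNReal.ofReal (4 * Real.sqrt n * τ) ^ n * X.ρ ((Metric.ball y R).indicator 1) := by
  classical
  rcases Nat.eq_zero_or_pos n with hn | hn
  · subst hn
    have hball : ball y (τ * R) = ball y R := by
      ext x
      have hx : x = y := Subsingleton.elim x y
      simp [hx, mem_ball, hR, mul_pos (lt_trans one_pos hτ) hR]
    simp [hball]
  · have hn1 : (1:ℝ) ≤ (n:ℝ) := by exact_mod_cast hn
    have hsn : (1:ℝ) ≤ Real.sqrt n := by
      rw [show (1:ℝ) = Real.sqrt 1 by simp]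
      exact Real.sqrt_le_sqrt hn1
    have hsn0 : (0:ℝ) < Real.sqrt n := lt_of_lt_of_le one_pos hsn
    set s : ℝ := R / Real.sqrt n with hs_def
    have hs : 0 < s := div_pos hR hsn0
    have hτ0 : (0:ℝ) < τ := lt_trans one_pos hτ
    have hτsn : (1:ℝ) < τ * Real.sqrt n := by nlinarith
    set M : ℤ := ⌊τ * Real.sqrt n + 1/2⌋ with hM_def
    have hM1 : 1 ≤ M := by
      rw [hM_def, Int.le_floor]
      push_cast
      linarith
    have hMle : (M:ℝ) ≤ τ * Real.sqrt n + 1/2 := Int.floor_le _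
    set F : Finset (Fin n → ℤ) := Fintype.piFinset (fun _ => Finset.Icc (-M) M) with hF_def
    set c : (Fin n → ℤ) → EuclideanSpace ℝ (Fin n) :=
      fun m => (WithLp.equiv 2 (Fin n → ℝ)).symm (fun i => y i + s * (m i)) with hc_def
    have hc_apply : ∀ m i, c m i = y i + s * (m i) := fun m i => rfl
    -- covering
    have cover : ∀ x ∈ ball y (τ * R), ∃ m ∈ F, x ∈ ball (c m) R := by
      intro x hx
      set m : Fin n → ℤ := fun i => round ((x i - y i) / s) with hm_def
      have hcoord : ∀ i, |x i - (c m i)| ≤ s / 2 := by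
        intro i
        rw [hc_apply]
        have h1 : |(x i - y i) / s - round ((x i - y i) / s)| ≤ 1/2 := abs_sub_round _
        have h0 : x i - (y i + s * (m i)) = s * ((x i - y i) / s - round ((x i - y i) / s)) := by
          show x i - (y i + s * (round ((x i - y i) / s) : ℤ)) = _
          field_simp
          ring
        rw [h0, abs_mul, abs_of_pos hs]
        calc s * |(x i - y i) / s - round ((x i - y i) / s)| ≤ s * (1/2) :=
              mul_le_mul_of_nonneg_left h1 hs.le
          _ = s / 2 := by ring
      have hxcoord : ∀ i, |x i - y i| < τ * R := by
        intro i
        have h1 : dist (x i) (y i) ≤ dist x y := by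
          rw [EuclideanSpace.dist_eq]
          rw [show dist (x i) (y i) = Real.sqrt (dist (x i) (y i) ^ 2) by
            rw [Real.sqrt_sq dist_nonneg]]
          apply Real.sqrt_le_sqrt
          exact Finset.single_le_sum (f := fun j => dist (x j) (y j) ^ 2)
            (fun j _ => sq_nonneg _) (Finset.mem_univ i)
        calc |x i - y i| = dist (x i) (y i) := (Real.dist_eq _ _).symm
          _ ≤ dist x y := h1
          _ < τ * R := mem_ball.mp hx
      refine ⟨m, ?_, ?_⟩
      · rw [hF_def, Fintype.mem_piFinset]
        intro i
        rw [Finset.mem_Icc, ← abs_le, hM_def, Int.le_floor, Int.cast_abs]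
        have h1 : |(m i : ℝ)| ≤ |(x i - y i) / s| + 1/2 := by
          have := abs_sub_round ((x i - y i) / s)
          calc |(m i : ℝ)| = |((x i - y i)/s) - (((x i - y i)/s) - (m i : ℝ))| := by ring_nf
            _ ≤ |(x i - y i)/s| + |((x i - y i)/s) - (m i : ℝ)| := abs_sub _ _
            _ ≤ |(x i - y i)/s| + 1/2 := by
                exact add_le_add le_rfl this
        have h2 : |(x i - y i) / s| ≤ τ * Real.sqrt n := by
          rw [abs_div, abs_of_pos hs, div_le_iff₀ hs]
          calc |x i - y i| ≤ τ * R := (hxcoord i).le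
            _ = τ * Real.sqrt n * s := by
                rw [hs_def]; field_simp
        linarith
      · rw [mem_ball, EuclideanSpace.dist_eq]
        have hsum : ∑ i, dist (x i) (c m i) ^ 2 ≤ (n:ℝ) * (s/2)^2 := by
          have h1 : ∀ i ∈ Finset.univ, dist (x i) (c m i) ^ 2 ≤ (s/2)^2 := by
            intro i _
            rw [Real.dist_eq]
            exact pow_le_pow_left₀ (abs_nonneg _) (hcoord i) 2
          calc ∑ i, dist (x i) (c m i) ^ 2 ≤ ∑ _i : Fin n, (s/2)^2 := Finset.sum_le_sum h1
            _ = (n:ℝ) * (s/2)^2 := by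
                rw [Finset.sum_const, Finset.card_univ, Fintype.card_fin, nsmul_eq_mul]
        have h2 : Real.sqrt ((n:ℝ) * (s/2)^2) = Real.sqrt n * (s/2) := by
          rw [Real.sqrt_mul (by positivity), Real.sqrt_sq (by positivity)]
        have h3 : Real.sqrt n * (s/2) = R / 2 := by
          rw [hs_def]; field_simp
        calc Real.sqrt (∑ i, dist (x i) (c m i) ^ 2) ≤ Real.sqrt ((n:ℝ) * (s/2)^2) :=
              Real.sqrt_le_sqrt hsum
          _ = R / 2 := by rw [h2, h3]
          _ < R := by linarith
    -- pointwise bound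
    have pw : ∀ x, (ball y (τ*R)).indicator (1 : EuclideanSpace ℝ (Fin n) → ℝ≥0∞) x ≤ ∑ m ∈ F, (ball (c m) R).indicator 1 x := by
      intro x
      by_cases hx : x ∈ ball y (τ * R)
      · obtain ⟨m, hmF, hmb⟩ := cover x hx
        rw [Set.indicator_of_mem hx]
        calc (1 : EuclideanSpace ℝ (Fin n) → ℝ≥0∞) x = (ball (c m) R).indicator 1 x := by
              rw [Set.indicator_of_mem hmb]
          _ ≤ ∑ m ∈ F, (ball (c m) R).indicator 1 x :=
              Finset.single_le_sum (f := fun m => (ball (c m) R).indicator 1 x)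
                (fun _ _ => zero_le) hmF
      · rw [Set.indicator_of_notMem hx]; exact zero_le
    -- counting
    have hcard : (F.card : ℝ≥0∞) ≤ ENNReal.ofReal (4 * Real.sqrt n * τ) ^ n := by
      have h1 : F.card = ((M + 1 + M).toNat) ^ n := by
        rw [hF_def, Fintype.card_piFinset]
        simp [Int.card_Icc, sub_neg_eq_add]
      rw [h1]
      push_cast
      apply pow_le_pow_left₀ (by positivity)
      rw [show (((M + 1 + M).toNat : ℝ≥0∞)) = ENNReal.ofReal ((M + 1 + M).toNat : ℝ) by
        rw [ENNReal.ofReal_natCast]]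
      apply ENNReal.ofReal_le_ofReal
      have h2 : ((M + 1 + M).toNat : ℝ) = 2 * (M:ℝ) + 1 := by
        have h3 : ((M + 1 + M).toNat : ℤ) = M + 1 + M := Int.toNat_of_nonneg (by omega)
        have h4 : (((M + 1 + M).toNat : ℤ) : ℝ) = ((M:ℝ) + 1 + M) := by rw [h3]; push_cast; ring
        push_cast at h4
        rw [h4]; ring
      rw [h2]
      nlinarith
    -- conclusion
    calc X.ρ ((ball y (τ*R)).indicator 1)
        ≤ X.ρ (fun x => ∑ m ∈ F, (ball (c m) R).indicator 1 x) :=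
          X.ρ_mono _ _ (Filter.Eventually.of_forall pw)
      _ ≤ ∑ m ∈ F, X.ρ ((ball (c m) R).indicator 1) := BFN_sum_le X F _
      _ = F.card * X.ρ ((ball y R).indicator 1) := by
          rw [Finset.sum_congr rfl (fun m _ => BFN_ball_translate X hTI y (c m) R),
            Finset.sum_const, nsmul_eq_mul]
      _ ≤ ENNReal.ofReal (4 * Real.sqrt n * τ) ^ n * X.ρ ((ball y R).indicator 1) :=
          mul_le_mul_left hcard _

/-- In a translation-invariant Banach function space on ℝⁿ, for all `τ > 1`, `R > 0` and `y`,
`‖χ_{B(y,τR)}‖_X / ‖χ_{B(y,R)}‖_X ≤ (4 √n τ)ⁿ`; in particular, every translation-invariant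
Banach function space satisfies the doubling property. -/
theorem translationInvariant_ball_ratio_le_and_doubling {n : ℕ}
    (X : BanachFunctionNorm (EuclideanSpace ℝ (Fin n)))
    (hTI : ∀ (y : EuclideanSpace ℝ (Fin n)) (f : EuclideanSpace ℝ (Fin n) → ℝ≥0∞),
        X.ρ (fun x => f (x - y)) = X.ρ f) :
    (∀ τ R : ℝ, 1 < τ → 0 < R → ∀ y : EuclideanSpace ℝ (Fin n),
      X.ρ ((Metric.ball y (τ * R)).indicator 1) / X.ρ ((Metric.ball y R).indicator 1)
        ≤ ENNReal.ofReal (4 * Real.sqrt n * τ) ^ n) ∧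
    (∃ τ : ℝ, 1 < τ ∧ ∃ Cτ : ℝ≥0∞, 0 < Cτ ∧ Cτ < ⊤ ∧
      ∀ R : ℝ, 0 < R → ∀ y : EuclideanSpace ℝ (Fin n),
        X.ρ ((Metric.ball y (τ * R)).indicator 1)
          ≤ Cτ * X.ρ ((Metric.ball y R).indicator 1)) := by
  constructor
  · intro τ R hτ hR y
    exact ENNReal.div_le_of_le_mul (BFN_key X hTI hτ hR y)
  · refine ⟨2, one_lt_two, ENNReal.ofReal (4 * Real.sqrt n * 2) ^ n, ?_, ?_, ?_⟩
    · rcases Nat.eq_zero_or_pos n with hn | hn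
      · subst hn; simp
      · apply ENNReal.pow_pos
        apply ENNReal.ofReal_pos.mpr
        have : (0:ℝ) < Real.sqrt n := Real.sqrt_pos.mpr (by exact_mod_cast hn)
        positivity
    · exact ENNReal.pow_lt_top ENNReal.ofReal_lt_top
    · intro R hR y
      have h := BFN_key X hTI one_lt_two hR y
      calc X.ρ ((ball y (2 * R)).indicator 1)
          ≤ ENNReal.ofReal (4 * Real.sqrt n * 2) ^ n * X.ρ ((ball y R).indicator 1) := h
        _ = _ := rfl
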